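/- Let m > 0. For every real-valued Schwartz function f on ℝ there exists a real-valued Schwartz function h on ℝ such that ĥ(λ) = i·f̂(λ) for every real λ with λ > m, where ˆ denotes the Fourier transform. (Consequently the space Z̃_j = { λ ↦ (λ²−m²)^{(2j+1)/4} f̂(λ) on (m,∞) : f real-valued Schwartz } is a complex-linear subspace even though only real-valued f occur.) -/

import Mathlib

open MeasureTheory Complex FourierTransform SchwartzMap Function Real

noncomputable section

namespace RealSchwartzAux

lemma hasTemperateGrowth_of_compactSupport {E F : Type*} [NormedAddCommGroup E]
    [NormedSpace ℝ E] [NormedAddCommGroup F] [NormedSpace ℝ F] {f : E → F}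
    (h1 : ContDiff ℝ ((⊤:ℕ∞)) f) (h2 : HasCompactSupport f) : Function.HasTemperateGrowth f := by
  refine ⟨h1, fun n => ?_⟩
  obtain ⟨C, hC⟩ := (h2.iteratedFDeriv n).exists_bound_of_continuous
    (h1.continuous_iteratedFDeriv (by exact_mod_cast le_top))
  exact ⟨0, C, fun x => by simpa using hC x⟩

/-- Smooth odd cutoff: equals `1` on `[m, ∞)` and `-1` on `(-∞, -m]`. -/
def phi (m : ℝ) (x : ℝ) : ℝ :=
  Real.smoothTransition (x / m) - Real.smoothTransition (-x / m)

lemma phi_contDiff (m : ℝ) : ContDiff ℝ ((⊤:ℕ∞)) (phi m) := by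
  unfold phi
  exact ((Real.smoothTransition.contDiff.comp (contDiff_id.div_const m)).sub
    (Real.smoothTransition.contDiff.comp ((contDiff_id.neg).div_const m)))

lemma phi_one {m x : ℝ} (hm : 0 < m) (hx : m ≤ x) : phi m x = 1 := by
  unfold phi
  rw [Real.smoothTransition.one_of_one_le ((one_le_div hm).2 hx),
    Real.smoothTransition.zero_of_nonpos
      (by apply div_nonpos_of_nonpos_of_nonneg <;> linarith)]
  ring

lemma phi_neg (m x : ℝ) : phi m (-x) = - phi m x := by
  unfold phi
  rw [neg_neg]
  ring

lemma phi_abs_le (m x : ℝ) : |phi m x| ≤ 1 := by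
  have h1 := Real.smoothTransition.nonneg (x / m)
  have h2 := Real.smoothTransition.le_one (x / m)
  have h3 := Real.smoothTransition.nonneg (-x / m)
  have h4 := Real.smoothTransition.le_one (-x / m)
  rw [abs_le]; constructor <;> simp [phi] <;> linarith

lemma fderiv_phi_zero {m x : ℝ} (hm : 0 < m) (hx : x ∉ Set.Icc (-m) m) :
    fderiv ℝ (phi m) x = 0 := by
  rw [Set.mem_Icc, not_and_or, not_le, not_le] at hx
  rcases hx with hx | hx
  · have hev : phi m =ᶠ[nhds x] fun _ => (-1 : ℝ) := by
      filter_upwards [Iio_mem_nhds hx] with y hy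
      have : phi m (-(-y)) = - phi m (-y) := phi_neg m (-y)
      rw [neg_neg] at this
      rw [this, phi_one hm (by simp only [Set.mem_Iio] at hy; linarith)]
    rw [hev.fderiv_eq, fderiv_const_apply]
  · have hev : phi m =ᶠ[nhds x] fun _ => (1 : ℝ) := by
      filter_upwards [Ioi_mem_nhds hx] with y hy
      exact phi_one hm hy.le
    rw [hev.fderiv_eq, fderiv_const_apply]

lemma phi_temperate {m : ℝ} (hm : 0 < m) : Function.HasTemperateGrowth (phi m) := by
  apply Function.HasTemperateGrowth.of_fderiv (k := 1) (C := 1)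
  · apply hasTemperateGrowth_of_compactSupport
    · exact (phi_contDiff m).fderiv_right (by exact_mod_cast le_top)
    · exact HasCompactSupport.intro isCompact_Icc (fun x hx => fderiv_phi_zero hm hx)
  · exact (phi_contDiff m).differentiable (by simp)
  · intro x
    have := phi_abs_le m x
    have h2 : (0:ℝ) ≤ |x| := abs_nonneg x
    simp only [Real.norm_eq_abs, pow_one]
    nlinarith

lemma conj_fourierIntegral (g : ℝ → ℂ) (x : ℝ) :
    starRingEnd ℂ (FourierTransform.fourier g x) =
      FourierTransform.fourier (fun v => starRingEnd ℂ (g v)) (-x) := by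
  rw [Real.fourier_real_eq_integral_exp_smul,
    Real.fourier_real_eq_integral_exp_smul, ← integral_conj]
  congr 1
  ext v
  rw [smul_eq_mul, smul_eq_mul, map_mul, ← Complex.exp_conj]
  congr 2
  rw [map_mul, Complex.conj_I, Complex.conj_ofReal]
  push_cast
  ring

end RealSchwartzAux

open RealSchwartzAux

theorem exists_real_schwartz_fourier_eq_I_mul (m : ℝ) (hm : 0 < m)
    (f : SchwartzMap ℝ ℂ) (hf : ∀ t, (f t).im = 0) :
    ∃ h : SchwartzMap ℝ ℂ, (∀ t, (h t).im = 0) ∧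
      ∀ lam : ℝ, m < lam →
        FourierTransform.fourier (⇑h) lam = Complex.I * FourierTransform.fourier (⇑f) lam := by
  have hφ : Function.HasTemperateGrowth (phi m) := phi_temperate hm
  set B : ℂ →L[ℝ] ℝ →L[ℝ] ℂ :=
    ((ContinuousLinearMap.lsmul ℝ ℝ : ℝ →L[ℝ] ℂ →L[ℝ] ℂ).flip).comp
      (((ContinuousLinearMap.mul ℂ ℂ) Complex.I).restrictScalars ℝ) with hB
  set G : SchwartzMap ℝ ℂ :=
    SchwartzMap.bilinLeftCLM B hφ ((SchwartzMap.fourierTransformCLE ℝ (SchwartzMap ℝ ℂ)) f) with hGdef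
  have hG : ∀ x, G x = phi m x • (Complex.I * FourierTransform.fourier (⇑f) x) := fun x => rfl
  -- conjugation symmetry of f̂
  have hfconj : (fun v => starRingEnd ℂ (f v)) = ⇑f := by
    ext v
    exact Complex.conj_eq_iff_im.2 (hf v)
  have hFf : ∀ v, starRingEnd ℂ (FourierTransform.fourier (⇑f) v) =
      FourierTransform.fourier (⇑f) (-v) := by
    intro v
    rw [conj_fourierIntegral, hfconj]
  -- conjugation symmetry of G
  have hGconj : ∀ v, starRingEnd ℂ (G v) = G (-v) := by
    intro v
    rw [hG, hG, phi_neg]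
    rw [Complex.real_smul, Complex.real_smul, map_mul, map_mul, Complex.conj_ofReal,
      Complex.conj_I, hFf]
    push_cast
    ring
  refine ⟨(SchwartzMap.fourierTransformCLE ℝ (SchwartzMap ℝ ℂ)).symm G, ?_, ?_⟩
  · intro t
    have hcoe : ⇑((SchwartzMap.fourierTransformCLE ℝ (SchwartzMap ℝ ℂ)).symm G) = FourierTransform.fourierInv ⇑G :=
      SchwartzMap.fourierInv_coe G
    rw [← Complex.conj_eq_iff_im, hcoe]
    rw [Real.fourierInv_eq_fourier_neg, conj_fourierIntegral, neg_neg]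
    have : (fun v => starRingEnd ℂ (G v)) = fun v => G (-v) := funext hGconj
    rw [this, ← Real.fourierInv_eq_fourier_comp_neg,
      Real.fourierInv_eq_fourier_neg]
  · intro lam hlam
    have h1 : FourierTransform.fourier (⇑((SchwartzMap.fourierTransformCLE ℝ (SchwartzMap ℝ ℂ)).symm G)) = ⇑G := by
      have := (SchwartzMap.fourierTransformCLE ℝ (SchwartzMap ℝ ℂ)).apply_symm_apply G
      calc FourierTransform.fourier (⇑((SchwartzMap.fourierTransformCLE ℝ (SchwartzMap ℝ ℂ)).symm G))
          = ⇑((SchwartzMap.fourierTransformCLE ℝ (SchwartzMap ℝ ℂ)) ((SchwartzMap.fourierTransformCLE ℝ (SchwartzMap ℝ ℂ)).symm G)) :=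
            rfl
        _ = ⇑G := by rw [this]
    rw [h1, hG, phi_one hm hlam.le, one_smul]
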